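/- The seven vector fields on ℝ² \ {0}: r∂_r, ∂_θ, r∂_x, r∂_y, −x r∂_r, −y r∂_r, −r²∂_r (in polar/Cartesian coordinates with r = √(x²+y²)) are linearly independent over ℝ and span a 7-dimensional Lie algebra of vector fields (i.e., their ℝ-span is closed under Lie bracket). -/

import Mathlib

set_option maxHeartbeats 1000000


open Real

/-- The seven Kepler infinitesimal orbital symmetries, as vector fields on the
punctured plane (in Cartesian components; `r∂_r = (x,y)`, `∂_θ = (−y,x)`,
`r∂_x = (r,0)`, `r∂_y = (0,r)`, `−x r∂_r`, `−y r∂_r`, `−r² ∂_r`). -/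
noncomputable def keplerVF : Fin 7 → (ℝ × ℝ → ℝ × ℝ) :=
  fun i p =>
    let r := Real.sqrt (p.1 ^ 2 + p.2 ^ 2)
    match i with
    | 0 => (p.1, p.2)
    | 1 => (-p.2, p.1)
    | 2 => (r, 0)
    | 3 => (0, r)
    | 4 => (-p.1 ^ 2, -p.1 * p.2)
    | 5 => (-p.1 * p.2, -p.2 ^ 2)
    | 6 => (-(r * p.1), -(r * p.2))

/-- Lie bracket of vector fields on `ℝ²`: `[V,W](p) = DW(p)V(p) − DV(p)W(p)`. -/
noncomputable def lieBracketVF (V W : ℝ × ℝ → ℝ × ℝ) : ℝ × ℝ → ℝ × ℝ :=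
  fun p => fderiv ℝ W p (V p) - fderiv ℝ V p (W p)

section Aux
open ContinuousLinearMap

lemma kvf_sq_pos (p : ℝ × ℝ) (hp : p ≠ 0) : 0 < p.1 ^ 2 + p.2 ^ 2 := by
  rcases eq_or_ne p.1 0 with h1 | h1
  · have h2 : p.2 ≠ 0 := fun h2 => hp (Prod.ext h1 h2)
    positivity
  · positivity

lemma kvf_r_pos (p : ℝ × ℝ) (hp : p ≠ 0) : 0 < Real.sqrt (p.1 ^ 2 + p.2 ^ 2) :=
  Real.sqrt_pos.mpr (kvf_sq_pos p hp)

lemma kvf_hasFDerivAt_r (p : ℝ × ℝ) (hp : p ≠ 0) :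
    HasFDerivAt (fun q : ℝ × ℝ => Real.sqrt (q.1 ^ 2 + q.2 ^ 2))
      ((p.1 / Real.sqrt (p.1 ^ 2 + p.2 ^ 2)) • fst ℝ ℝ ℝ +
       (p.2 / Real.sqrt (p.1 ^ 2 + p.2 ^ 2)) • snd ℝ ℝ ℝ) p := by
  have hq := kvf_sq_pos p hp
  have h1 : HasFDerivAt (fun q : ℝ × ℝ => q.1 ^ 2 + q.2 ^ 2)
      ((p.1 • fst ℝ ℝ ℝ + p.1 • fst ℝ ℝ ℝ) + (p.2 • snd ℝ ℝ ℝ + p.2 • snd ℝ ℝ ℝ)) p := by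
    have := ((hasFDerivAt_fst (𝕜 := ℝ) (p := p)).mul (hasFDerivAt_fst (𝕜 := ℝ) (p := p))).add
      ((hasFDerivAt_snd (𝕜 := ℝ) (p := p)).mul (hasFDerivAt_snd (𝕜 := ℝ) (p := p)))
    exact this.congr_of_eventuallyEq (Filter.Eventually.of_forall fun q => by simp [pow_two])
  have h2 := (Real.hasDerivAt_sqrt hq.ne').comp_hasFDerivAt p h1
  refine h2.congr_fderiv ?_
  symm
  refine ContinuousLinearMap.ext fun v => ?_
  simp [ContinuousLinearMap.smul_apply]
  have hr : Real.sqrt (p.1 ^ 2 + p.2 ^ 2) ≠ 0 := (Real.sqrt_pos.mpr hq).ne'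
  field_simp
  ring

/-- The (pointwise) differential of each Kepler vector field, applied to `v`. -/
noncomputable def keplerD : Fin 7 → (ℝ × ℝ) → (ℝ × ℝ) → (ℝ × ℝ) :=
  fun i p v =>
    let r := Real.sqrt (p.1 ^ 2 + p.2 ^ 2)
    let dr := (p.1 * v.1 + p.2 * v.2) / r
    match i with
    | 0 => (v.1, v.2)
    | 1 => (-v.2, v.1)
    | 2 => (dr, 0)
    | 3 => (0, dr)
    | 4 => (-(2 * p.1 * v.1), -(p.2 * v.1 + p.1 * v.2))
    | 5 => (-(p.2 * v.1 + p.1 * v.2), -(2 * p.2 * v.2))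
    | 6 => (-(dr * p.1 + r * v.1), -(dr * p.2 + r * v.2))

lemma fderiv_keplerVF (i : Fin 7) (p : ℝ × ℝ) (hp : p ≠ 0) (v : ℝ × ℝ) :
    fderiv ℝ (keplerVF i) p v = keplerD i p v := by
  have hr0 : Real.sqrt (p.1 ^ 2 + p.2 ^ 2) ≠ 0 := (kvf_r_pos p hp).ne'
  have hR := kvf_hasFDerivAt_r p hp
  fin_cases i
  · show fderiv ℝ (keplerVF 0) p v = keplerD 0 p v
    have H : HasFDerivAt (keplerVF 0) ((fst ℝ ℝ ℝ).prod (snd ℝ ℝ ℝ)) p :=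
      hasFDerivAt_fst.prodMk hasFDerivAt_snd
    rw [H.fderiv]; simp [keplerD]
  · show fderiv ℝ (keplerVF 1) p v = keplerD 1 p v
    have H : HasFDerivAt (keplerVF 1) ((-(snd ℝ ℝ ℝ)).prod (fst ℝ ℝ ℝ)) p :=
      (hasFDerivAt_snd.neg).prodMk hasFDerivAt_fst
    rw [H.fderiv]; simp [keplerD]
  · show fderiv ℝ (keplerVF 2) p v = keplerD 2 p v
    have H := hR.prodMk (hasFDerivAt_const (0:ℝ) p)
    rw [show keplerVF 2 = fun q : ℝ × ℝ => (Real.sqrt (q.1 ^ 2 + q.2 ^ 2), (0:ℝ)) from rfl,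
      H.fderiv]
    simp [keplerD]
    try field_simp
    try ring
  · show fderiv ℝ (keplerVF 3) p v = keplerD 3 p v
    have H := (hasFDerivAt_const (0:ℝ) p).prodMk hR
    rw [show keplerVF 3 = fun q : ℝ × ℝ => ((0:ℝ), Real.sqrt (q.1 ^ 2 + q.2 ^ 2)) from rfl,
      H.fderiv]
    simp [keplerD]
    try field_simp
    try ring
  · show fderiv ℝ (keplerVF 4) p v = keplerD 4 p v
    have H := (((hasFDerivAt_fst (𝕜 := ℝ) (p := p)).mul hasFDerivAt_fst).neg).prodMk
      (((hasFDerivAt_fst (𝕜 := ℝ) (p := p)).mul hasFDerivAt_snd).neg)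
    have heq : keplerVF 4 = fun q : ℝ × ℝ => (-(q.1 * q.1), -(q.1 * q.2)) := by
      funext q
      show ((-q.1 ^ 2, -q.1 * q.2) : ℝ × ℝ) = _
      simp [pow_two]
    rw [heq, HasFDerivAt.fderiv (f := fun q : ℝ × ℝ => (-(q.1 * q.1), -(q.1 * q.2))) H]
    simp [keplerD]
    constructor <;> ring
  · show fderiv ℝ (keplerVF 5) p v = keplerD 5 p v
    have H := (((hasFDerivAt_fst (𝕜 := ℝ) (p := p)).mul hasFDerivAt_snd).neg).prodMk
      (((hasFDerivAt_snd (𝕜 := ℝ) (p := p)).mul hasFDerivAt_snd).neg)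
    have heq : keplerVF 5 = fun q : ℝ × ℝ => (-(q.1 * q.2), -(q.2 * q.2)) := by
      funext q
      show ((-q.1 * q.2, -q.2 ^ 2) : ℝ × ℝ) = _
      simp [pow_two]
    rw [heq, HasFDerivAt.fderiv (f := fun q : ℝ × ℝ => (-(q.1 * q.2), -(q.2 * q.2))) H]
    simp [keplerD]
    constructor <;> ring
  · show fderiv ℝ (keplerVF 6) p v = keplerD 6 p v
    have H := ((hR.mul hasFDerivAt_fst).neg).prodMk ((hR.mul hasFDerivAt_snd).neg)
    rw [show keplerVF 6 = fun q : ℝ × ℝ =>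
        (-(Real.sqrt (q.1 ^ 2 + q.2 ^ 2) * q.1), -(Real.sqrt (q.1 ^ 2 + q.2 ^ 2) * q.2)) from rfl,
      HasFDerivAt.fderiv (f := fun q : ℝ × ℝ =>
        (-(Real.sqrt (q.1 ^ 2 + q.2 ^ 2) * q.1), -(Real.sqrt (q.1 ^ 2 + q.2 ^ 2) * q.2))) H]
    simp [keplerD]
    have hr2 : Real.sqrt (p.1 ^ 2 + p.2 ^ 2) ^ 2 = p.1 ^ 2 + p.2 ^ 2 :=
      Real.sq_sqrt (kvf_sq_pos p hp).le
    constructor <;> ring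

/-- Structure constants for the Kepler Lie algebra. -/
noncomputable def kc : Fin 7 → Fin 7 → Fin 7 → ℝ
  | 0, 4 => Pi.single 4 1
  | 4, 0 => Pi.single 4 (-1)
  | 0, 5 => Pi.single 5 1
  | 5, 0 => Pi.single 5 (-1)
  | 0, 6 => Pi.single 6 1
  | 6, 0 => Pi.single 6 (-1)
  | 1, 2 => Pi.single 3 (-1)
  | 2, 1 => Pi.single 3 1
  | 1, 3 => Pi.single 2 1
  | 3, 1 => Pi.single 2 (-1)
  | 1, 4 => Pi.single 5 (-1)
  | 4, 1 => Pi.single 5 1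
  | 1, 5 => Pi.single 4 1
  | 5, 1 => Pi.single 4 (-1)
  | 2, 3 => Pi.single 1 1
  | 3, 2 => Pi.single 1 (-1)
  | 2, 4 => Pi.single 6 1
  | 4, 2 => Pi.single 6 (-1)
  | 2, 6 => Pi.single 4 1
  | 6, 2 => Pi.single 4 (-1)
  | 3, 5 => Pi.single 6 1
  | 5, 3 => Pi.single 6 (-1)
  | 3, 6 => Pi.single 5 1
  | 6, 3 => Pi.single 5 (-1)
  | _, _ => 0

lemma kc_0_0 : kc 0 0 = (0 : Fin 7 → ℝ) := rfl
lemma kc_0_1 : kc 0 1 = (0 : Fin 7 → ℝ) := rfl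
lemma kc_0_2 : kc 0 2 = (0 : Fin 7 → ℝ) := rfl
lemma kc_0_3 : kc 0 3 = (0 : Fin 7 → ℝ) := rfl
lemma kc_0_4 : kc 0 4 = (Pi.single 4 1 : Fin 7 → ℝ) := rfl
lemma kc_0_5 : kc 0 5 = (Pi.single 5 1 : Fin 7 → ℝ) := rfl
lemma kc_0_6 : kc 0 6 = (Pi.single 6 1 : Fin 7 → ℝ) := rfl
lemma kc_1_0 : kc 1 0 = (0 : Fin 7 → ℝ) := rfl
lemma kc_1_1 : kc 1 1 = (0 : Fin 7 → ℝ) := rfl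
lemma kc_1_2 : kc 1 2 = (Pi.single 3 (-1) : Fin 7 → ℝ) := rfl
lemma kc_1_3 : kc 1 3 = (Pi.single 2 1 : Fin 7 → ℝ) := rfl
lemma kc_1_4 : kc 1 4 = (Pi.single 5 (-1) : Fin 7 → ℝ) := rfl
lemma kc_1_5 : kc 1 5 = (Pi.single 4 1 : Fin 7 → ℝ) := rfl
lemma kc_1_6 : kc 1 6 = (0 : Fin 7 → ℝ) := rfl
lemma kc_2_0 : kc 2 0 = (0 : Fin 7 → ℝ) := rfl
lemma kc_2_1 : kc 2 1 = (Pi.single 3 1 : Fin 7 → ℝ) := rfl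
lemma kc_2_2 : kc 2 2 = (0 : Fin 7 → ℝ) := rfl
lemma kc_2_3 : kc 2 3 = (Pi.single 1 1 : Fin 7 → ℝ) := rfl
lemma kc_2_4 : kc 2 4 = (Pi.single 6 1 : Fin 7 → ℝ) := rfl
lemma kc_2_5 : kc 2 5 = (0 : Fin 7 → ℝ) := rfl
lemma kc_2_6 : kc 2 6 = (Pi.single 4 1 : Fin 7 → ℝ) := rfl
lemma kc_3_0 : kc 3 0 = (0 : Fin 7 → ℝ) := rfl
lemma kc_3_1 : kc 3 1 = (Pi.single 2 (-1) : Fin 7 → ℝ) := rfl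
lemma kc_3_2 : kc 3 2 = (Pi.single 1 (-1) : Fin 7 → ℝ) := rfl
lemma kc_3_3 : kc 3 3 = (0 : Fin 7 → ℝ) := rfl
lemma kc_3_4 : kc 3 4 = (0 : Fin 7 → ℝ) := rfl
lemma kc_3_5 : kc 3 5 = (Pi.single 6 1 : Fin 7 → ℝ) := rfl
lemma kc_3_6 : kc 3 6 = (Pi.single 5 1 : Fin 7 → ℝ) := rfl
lemma kc_4_0 : kc 4 0 = (Pi.single 4 (-1) : Fin 7 → ℝ) := rfl
lemma kc_4_1 : kc 4 1 = (Pi.single 5 1 : Fin 7 → ℝ) := rfl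
lemma kc_4_2 : kc 4 2 = (Pi.single 6 (-1) : Fin 7 → ℝ) := rfl
lemma kc_4_3 : kc 4 3 = (0 : Fin 7 → ℝ) := rfl
lemma kc_4_4 : kc 4 4 = (0 : Fin 7 → ℝ) := rfl
lemma kc_4_5 : kc 4 5 = (0 : Fin 7 → ℝ) := rfl
lemma kc_4_6 : kc 4 6 = (0 : Fin 7 → ℝ) := rfl
lemma kc_5_0 : kc 5 0 = (Pi.single 5 (-1) : Fin 7 → ℝ) := rfl
lemma kc_5_1 : kc 5 1 = (Pi.single 4 (-1) : Fin 7 → ℝ) := rfl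
lemma kc_5_2 : kc 5 2 = (0 : Fin 7 → ℝ) := rfl
lemma kc_5_3 : kc 5 3 = (Pi.single 6 (-1) : Fin 7 → ℝ) := rfl
lemma kc_5_4 : kc 5 4 = (0 : Fin 7 → ℝ) := rfl
lemma kc_5_5 : kc 5 5 = (0 : Fin 7 → ℝ) := rfl
lemma kc_5_6 : kc 5 6 = (0 : Fin 7 → ℝ) := rfl
lemma kc_6_0 : kc 6 0 = (Pi.single 6 (-1) : Fin 7 → ℝ) := rfl
lemma kc_6_1 : kc 6 1 = (0 : Fin 7 → ℝ) := rfl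
lemma kc_6_2 : kc 6 2 = (Pi.single 4 (-1) : Fin 7 → ℝ) := rfl
lemma kc_6_3 : kc 6 3 = (Pi.single 5 (-1) : Fin 7 → ℝ) := rfl
lemma kc_6_4 : kc 6 4 = (0 : Fin 7 → ℝ) := rfl
lemma kc_6_5 : kc 6 5 = (0 : Fin 7 → ℝ) := rfl
lemma kc_6_6 : kc 6 6 = (0 : Fin 7 → ℝ) := rfl

end Aux

/-- The seven vector fields are linearly independent over ℝ and
their ℝ-span is closed under the Lie bracket (a 7-dimensional Lie algebra). -/
theorem keplerVF_linearIndependent_and_bracket_closed :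
    (∀ cf : Fin 7 → ℝ,
        (∀ p : ℝ × ℝ, p ≠ 0 → ∑ i, cf i • keplerVF i p = 0) → cf = 0) ∧
    (∀ i j : Fin 7, ∃ cf : Fin 7 → ℝ, ∀ p : ℝ × ℝ, p ≠ 0 →
        lieBracketVF (keplerVF i) (keplerVF j) p = ∑ k, cf k • keplerVF k p) := by
  constructor
  · intro cf h
    have h4 : Real.sqrt 4 = 2 := by
      rw [show (4:ℝ) = 2 ^ 2 by norm_num, Real.sqrt_sq (by norm_num)]
    have e1 := h (1, 0) (by simp [Prod.ext_iff])
    have e2 := h (-1, 0) (by simp [Prod.ext_iff])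
    have e3 := h (0, 1) (by simp [Prod.ext_iff])
    have e4 := h (0, -1) (by simp [Prod.ext_iff])
    have e5 := h (2, 0) (by simp [Prod.ext_iff])
    simp [keplerVF, Fin.sum_univ_seven, Prod.ext_iff, h4] at e1 e2 e3 e4 e5
    funext i
    fin_cases i <;> simp <;>
      [ (linarith [e1.1, e2.1, e3.2, e4.2, e5.1]);
        (linarith [e1.2, e2.2]);
        (linarith [e3.1, e4.1]);
        (linarith [e1.2, e2.2]);
        (linarith [e1.1, e2.1, e3.1, e4.1]);
        (linarith [e1.1, e2.1, e3.2, e4.2, e5.1]);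
        (linarith [e1.1, e2.1, e3.2, e4.2, e5.1]) ]
  · intro i j
    refine ⟨kc i j, fun p hp => ?_⟩
    have hr0 : Real.sqrt (p.1 ^ 2 + p.2 ^ 2) ≠ 0 := (kvf_r_pos p hp).ne'
    have hr2 : Real.sqrt (p.1 ^ 2 + p.2 ^ 2) ^ 2 = p.1 ^ 2 + p.2 ^ 2 :=
      Real.sq_sqrt (kvf_sq_pos p hp).le
    have hq0 : p.1 ^ 2 + p.2 ^ 2 ≠ 0 := (kvf_sq_pos p hp).ne'
    have hc : Real.sqrt (p.2 ^ 2 + p.1 ^ 2) = Real.sqrt (p.1 ^ 2 + p.2 ^ 2) := by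
      rw [add_comm]
    have h3 : Real.sqrt (p.1 ^ 2 + p.2 ^ 2) ^ 3
        = (p.1 ^ 2 + p.2 ^ 2) * Real.sqrt (p.1 ^ 2 + p.2 ^ 2) := by
      rw [pow_succ, hr2]
    have h4 : Real.sqrt (p.1 ^ 2 + p.2 ^ 2) ^ 4 = (p.1 ^ 2 + p.2 ^ 2) ^ 2 := by
      rw [show Real.sqrt (p.1 ^ 2 + p.2 ^ 2) ^ 4
        = (Real.sqrt (p.1 ^ 2 + p.2 ^ 2) ^ 2) ^ 2 by ring, hr2]
    have h5 : Real.sqrt (p.1 ^ 2 + p.2 ^ 2) ^ 5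
        = (p.1 ^ 2 + p.2 ^ 2) ^ 2 * Real.sqrt (p.1 ^ 2 + p.2 ^ 2) := by
      rw [show Real.sqrt (p.1 ^ 2 + p.2 ^ 2) ^ 5
        = (Real.sqrt (p.1 ^ 2 + p.2 ^ 2) ^ 2) ^ 2 * Real.sqrt (p.1 ^ 2 + p.2 ^ 2) by ring, hr2]
    have h6 : Real.sqrt (p.1 ^ 2 + p.2 ^ 2) ^ 6 = (p.1 ^ 2 + p.2 ^ 2) ^ 3 := by
      rw [show Real.sqrt (p.1 ^ 2 + p.2 ^ 2) ^ 6
        = (Real.sqrt (p.1 ^ 2 + p.2 ^ 2) ^ 2) ^ 3 by ring, hr2]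
    have hb : lieBracketVF (keplerVF i) (keplerVF j) p =
        keplerD j p (keplerVF i p) - keplerD i p (keplerVF j p) := by
      simp only [lieBracketVF]
      rw [fderiv_keplerVF j p hp, fderiv_keplerVF i p hp]
    rw [hb]
    fin_cases i <;> fin_cases j <;>
      · try simp [kc_0_0, kc_0_1, kc_0_2, kc_0_3, kc_0_4, kc_0_5, kc_0_6, kc_1_0, kc_1_1, kc_1_2, kc_1_3, kc_1_4, kc_1_5, kc_1_6, kc_2_0, kc_2_1, kc_2_2, kc_2_3, kc_2_4, kc_2_5, kc_2_6, kc_3_0, kc_3_1, kc_3_2, kc_3_3, kc_3_4, kc_3_5, kc_3_6, kc_4_0, kc_4_1, kc_4_2, kc_4_3, kc_4_4, kc_4_5, kc_4_6, kc_5_0, kc_5_1, kc_5_2, kc_5_3, kc_5_4, kc_5_5, kc_5_6, kc_6_0, kc_6_1, kc_6_2, kc_6_3, kc_6_4, kc_6_5, kc_6_6, keplerD, keplerVF, Fin.sum_univ_seven, Pi.single_apply, Prod.ext_iff]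
        all_goals try constructor
        all_goals try ring
        all_goals try simp only [hc]
        all_goals try field_simp [hr0, hq0]
        all_goals try simp only [hc]
        all_goals try field_simp [hr0, hq0]
        all_goals try simp only [hc]
        all_goals try ring_nf
        all_goals try simp only [hc, hr2, h3, h4, h5, h6]
        all_goals try ring_nf
        all_goals try ring
        all_goals try simp [hr2, h3, h4, h5, h6]
        all_goals try nlinarith [hr2]
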